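/- Fix p ∈ [0,1), m* ∈ ℕ, and a decision function d for the elementary link MDP; write α(m) := d(m)(0), ᾱ(m) := 1 − α(m). Define N_d := 1 − p(1 − ∏_{m′=0}^{m*} α(m′)) + p·ᾱ(−1)·(1 + ∑_{m=1}^{m*} ∏_{m′=0}^{m−1} α(m′)) (which is strictly positive since p < 1), and the vector s_d with s_d(−1) := (1 − p(1 − ∏_{m′=0}^{m*} α(m′)))/N_d, s_d(0) := p·ᾱ(−1)/N_d, and s_d(m) := p·ᾱ(−1)·(∏_{m′=0}^{m−1} α(m′))/N_d for 1 ≤ m ≤ m*. Then s_d is a probability vector (entrywise nonnegative and summing to 1), and it is a stationary vector of the induced Markov chain: ∑_{s ∈ S} P^d(s′; s)·s_d(s) = s_d(s′) for all s′ ∈ S. -/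

import Mathlib

open BigOperators Filter

noncomputable section

/-- Transition matrix `T⁰` of the "wait" action on the state set `{-1, 0, …, m*}`:
it fixes `-1`, sends `m` to `m+1` for `0 ≤ m ≤ m*-1`, and sends `m*` to `-1`. -/
def T0 (mstar : ℕ) : ℤ → ℤ → ℝ := fun s' s =>
  if s = -1 then (if s' = -1 then 1 else 0)
  else if s = (mstar : ℤ) then (if s' = -1 then 1 else 0)
  else if s' = s + 1 then 1 else 0

/-- Transition matrix `T¹` of the "request" action: every state goes to `-1` with
probability `1-p` and to `0` with probability `p`. -/
def T1 (p : ℝ) : ℤ → ℤ → ℝ := fun s' _ =>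
  if s' = -1 then 1 - p else if s' = 0 then p else 0

/-- The transition matrix `P^d` induced by the decision function with wait-probability
`α s = d(s)(0)` and request-probability `1 - α s = d(s)(1)`. -/
def Pd (mstar : ℕ) (p : ℝ) (α : ℤ → ℝ) : ℤ → ℤ → ℝ := fun s' s =>
  T0 mstar s' s * α s + T1 p s' s * (1 - α s)

/-- The distribution of the Markov chain `(M(t))` under the stationary policy `(d, d, …)`;
time `0` carries the initial distribution `μ0` of `M(1)`. -/
def chainDist (mstar : ℕ) (p : ℝ) (α : ℤ → ℝ) (μ0 : ℤ → ℝ) : ℕ → ℤ → ℝ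
  | 0 => μ0
  | (t + 1) => fun s' =>
      ∑ s ∈ Finset.Icc (-1 : ℤ) (mstar : ℤ), Pd mstar p α s' s * chainDist mstar p α μ0 t s

/-- The expected link value `F̃^{(d,d,…)}(t) = ∑_{m=0}^{m*} f(m) Pr[M(t) = m]`. -/
def Ftil (mstar : ℕ) (p : ℝ) (α : ℤ → ℝ) (μ0 : ℤ → ℝ) (f : ℤ → ℝ) (t : ℕ) : ℝ :=
  ∑ m ∈ Finset.Icc (0 : ℤ) (mstar : ℤ), f m * chainDist mstar p α μ0 t m

/-- `α` is a valid decision function: each `α s` is a probability. -/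
def ValidDecision (mstar : ℕ) (α : ℤ → ℝ) : Prop :=
  ∀ s ∈ Finset.Icc (-1 : ℤ) (mstar : ℤ), 0 ≤ α s ∧ α s ≤ 1

/-- `μ0` is a valid initial distribution on the state set. -/
def ValidInit (mstar : ℕ) (μ0 : ℤ → ℝ) : Prop :=
  (∀ s ∈ Finset.Icc (-1 : ℤ) (mstar : ℤ), 0 ≤ μ0 s) ∧
    ∑ s ∈ Finset.Icc (-1 : ℤ) (mstar : ℤ), μ0 s = 1

/-- The normalization constant `N_d`. -/
def Nd (mstar : ℕ) (p : ℝ) (α : ℤ → ℝ) : ℝ :=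
  1 - p * (1 - ∏ m' ∈ Finset.Icc (0 : ℤ) (mstar : ℤ), α m')
    + p * (1 - α (-1)) *
        (1 + ∑ m ∈ Finset.Icc (1 : ℤ) (mstar : ℤ), ∏ m' ∈ Finset.Icc (0 : ℤ) (m - 1), α m')

/-- The steady-state distribution `s_d`. -/
def sd (mstar : ℕ) (p : ℝ) (α : ℤ → ℝ) : ℤ → ℝ := fun m =>
  if m = -1 then
    (1 - p * (1 - ∏ m' ∈ Finset.Icc (0 : ℤ) (mstar : ℤ), α m')) / Nd mstar p α
  else if m = 0 then p * (1 - α (-1)) / Nd mstar p α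
  else p * (1 - α (-1)) * (∏ m' ∈ Finset.Icc (0 : ℤ) (m - 1), α m') / Nd mstar p α


/-- Splitting an integer interval at the right end. -/
lemma Icc_split_right {a b : ℤ} (h : a ≤ b) :
    Finset.Icc a b = insert b (Finset.Icc a (b - 1)) := by
  ext x; simp only [Finset.mem_Icc, Finset.mem_insert]; omega

lemma not_mem_Icc_right {a b : ℤ} : b ∉ Finset.Icc a (b - 1) := by
  simp only [Finset.mem_Icc]; omega

/-- Telescoping sum identity. -/
lemma telescope (α : ℤ → ℝ) (n : ℕ) :
    ∑ m ∈ Finset.Icc (0 : ℤ) (n : ℤ), (1 - α m) * (∏ m' ∈ Finset.Icc (0 : ℤ) (m - 1), α m')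
      = 1 - ∏ m' ∈ Finset.Icc (0 : ℤ) (n : ℤ), α m' := by
  induction n with
  | zero =>
      simp [Finset.Icc_self, Finset.Icc_eq_empty (show ¬(0:ℤ) ≤ 0 - 1 by omega)]
  | succ k ih =>
      have hc : ((k + 1 : ℕ) : ℤ) = (k : ℤ) + 1 := by push_cast; ring
      rw [hc, Icc_split_right (show (0:ℤ) ≤ (k:ℤ) + 1 by positivity),
        Finset.sum_insert not_mem_Icc_right, Finset.prod_insert not_mem_Icc_right,
        show ((k:ℤ) + 1 - 1) = (k:ℤ) by ring, ih]
      ring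

/-- Uniform formula for `sd` on nonnegative states. -/
lemma sd_eq_of_nonneg (mstar : ℕ) (p : ℝ) (α : ℤ → ℝ) {m : ℤ} (h0 : 0 ≤ m) :
    sd mstar p α m
      = p * (1 - α (-1)) * (∏ m' ∈ Finset.Icc (0 : ℤ) (m - 1), α m') / Nd mstar p α := by
  rcases eq_or_lt_of_le h0 with h | h
  · rw [← h]
    simp [sd, Finset.Icc_eq_empty (show ¬(0:ℤ) ≤ 0 - 1 by omega)]
  · have h1 : m ≠ -1 := by omega
    have h2 : m ≠ 0 := by omega
    simp [sd, h1, h2]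

/-- **`s_d` is a stationary probability vector of the induced chain** for `p ∈ [0,1)`:
`N_d > 0`, `s_d` is entrywise nonnegative and sums to one, and
`∑_s P^d(s'; s) s_d(s) = s_d(s')` for all states `s'`. -/
theorem sd_stationary (mstar : ℕ) (p : ℝ) (hp0 : 0 ≤ p) (hp1 : p < 1)
    (α : ℤ → ℝ) (hα : ValidDecision mstar α) :
    0 < Nd mstar p α ∧
    (∀ s ∈ Finset.Icc (-1 : ℤ) (mstar : ℤ), 0 ≤ sd mstar p α s) ∧
    (∑ s ∈ Finset.Icc (-1 : ℤ) (mstar : ℤ), sd mstar p α s) = 1 ∧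
    (∀ s' ∈ Finset.Icc (-1 : ℤ) (mstar : ℤ),
      ∑ s ∈ Finset.Icc (-1 : ℤ) (mstar : ℤ), Pd mstar p α s' s * sd mstar p α s
        = sd mstar p α s') := by
  have hmem : ∀ s : ℤ, -1 ≤ s → s ≤ (mstar : ℤ) → (0 ≤ α s ∧ α s ≤ 1) := by
    intro s h1 h2; exact hα s (Finset.mem_Icc.mpr ⟨h1, h2⟩)
  have hα0 : ∀ s ∈ Finset.Icc (0 : ℤ) (mstar : ℤ), 0 ≤ α s := by
    intro s hs; rw [Finset.mem_Icc] at hs; exact (hmem s (by omega) hs.2).1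
  have hα1 : ∀ s ∈ Finset.Icc (0 : ℤ) (mstar : ℤ), α s ≤ 1 := by
    intro s hs; rw [Finset.mem_Icc] at hs; exact (hmem s (by omega) hs.2).2
  have hm1 : 0 ≤ α (-1) ∧ α (-1) ≤ 1 := hmem (-1) (le_refl _) (by omega)
  have hPi0 : 0 ≤ ∏ m' ∈ Finset.Icc (0 : ℤ) (mstar : ℤ), α m' := Finset.prod_nonneg hα0
  have hPi1 : (∏ m' ∈ Finset.Icc (0 : ℤ) (mstar : ℤ), α m') ≤ 1 :=
    Finset.prod_le_one hα0 hα1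
  have hQnn : ∀ m : ℤ, m ≤ (mstar : ℤ) →
      0 ≤ ∏ m' ∈ Finset.Icc (0 : ℤ) (m - 1), α m' := by
    intro m hm
    apply Finset.prod_nonneg
    intro i hi
    rw [Finset.mem_Icc] at hi
    exact (hmem i (by omega) (by omega)).1
  have hA : 0 < 1 - p * (1 - ∏ m' ∈ Finset.Icc (0 : ℤ) (mstar : ℤ), α m') := by
    nlinarith
  have hSnn : 0 ≤ ∑ m ∈ Finset.Icc (1 : ℤ) (mstar : ℤ),
      ∏ m' ∈ Finset.Icc (0 : ℤ) (m - 1), α m' :=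
    Finset.sum_nonneg (fun m hm => hQnn m (Finset.mem_Icc.mp hm).2)
  have hBnn : 0 ≤ p * (1 - α (-1)) := mul_nonneg hp0 (by linarith [hm1.2])
  have hNpos : 0 < Nd mstar p α := by
    unfold Nd
    have h2 : 0 ≤ p * (1 - α (-1)) *
        (1 + ∑ m ∈ Finset.Icc (1 : ℤ) (mstar : ℤ),
          ∏ m' ∈ Finset.Icc (0 : ℤ) (m - 1), α m') :=
      mul_nonneg hBnn (by linarith)
    linarith
  have hNne : Nd mstar p α ≠ 0 := ne_of_gt hNpos
  have hsdm1 : sd mstar p α (-1)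
      = (1 - p * (1 - ∏ m' ∈ Finset.Icc (0 : ℤ) (mstar : ℤ), α m')) / Nd mstar p α := by
    simp [sd]
  have hsd0 : sd mstar p α 0 = p * (1 - α (-1)) / Nd mstar p α := by
    simp [sd]
  have hsplit1 : Finset.Icc (-1 : ℤ) (mstar : ℤ)
      = insert (-1) (Finset.Icc (0 : ℤ) (mstar : ℤ)) := by
    ext x; simp only [Finset.mem_Icc, Finset.mem_insert]; omega
  have hnm1 : (-1 : ℤ) ∉ Finset.Icc (0 : ℤ) (mstar : ℤ) := by
    simp only [Finset.mem_Icc]; omega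
  have hsplit2 : Finset.Icc (0 : ℤ) (mstar : ℤ)
      = insert 0 (Finset.Icc (1 : ℤ) (mstar : ℤ)) := by
    ext x; simp only [Finset.mem_Icc, Finset.mem_insert]; omega
  have hn0 : (0 : ℤ) ∉ Finset.Icc (1 : ℤ) (mstar : ℤ) := by
    simp only [Finset.mem_Icc]; omega
  -- nonnegativity
  have hnonneg : ∀ s ∈ Finset.Icc (-1 : ℤ) (mstar : ℤ), 0 ≤ sd mstar p α s := by
    intro s hs; rw [Finset.mem_Icc] at hs
    rcases eq_or_lt_of_le hs.1 with h | h
    · rw [← h, hsdm1]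
      exact div_nonneg (le_of_lt hA) (le_of_lt hNpos)
    · have h0 : (0 : ℤ) ≤ s := by omega
      rw [sd_eq_of_nonneg mstar p α h0]
      exact div_nonneg (mul_nonneg hBnn (hQnn s hs.2)) (le_of_lt hNpos)
  -- sum over nonnegative states
  have hsum0 : ∑ m ∈ Finset.Icc (0 : ℤ) (mstar : ℤ), sd mstar p α m
      = p * (1 - α (-1)) *
          (1 + ∑ m ∈ Finset.Icc (1 : ℤ) (mstar : ℤ),
            ∏ m' ∈ Finset.Icc (0 : ℤ) (m - 1), α m') / Nd mstar p α := by
    rw [Finset.sum_congr rfl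
        (fun m hm => sd_eq_of_nonneg mstar p α (Finset.mem_Icc.mp hm).1)]
    rw [hsplit2, Finset.sum_insert hn0,
      Finset.Icc_eq_empty (show ¬(0 : ℤ) ≤ 0 - 1 by omega), Finset.prod_empty]
    rw [← Finset.sum_div, ← Finset.mul_sum]
    ring
  have hsum1 : (∑ s ∈ Finset.Icc (-1 : ℤ) (mstar : ℤ), sd mstar p α s) = 1 := by
    rw [hsplit1, Finset.sum_insert hnm1, hsum0, hsdm1, ← add_div,
      div_eq_one_iff_eq hNne]
    unfold Nd; ring
  -- telescoping weighted sum
  have hS : ∑ s ∈ Finset.Icc (-1 : ℤ) (mstar : ℤ), (1 - α s) * sd mstar p α s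
      = (1 - α (-1)) / Nd mstar p α := by
    rw [hsplit1, Finset.sum_insert hnm1]
    have h2 : ∑ m ∈ Finset.Icc (0 : ℤ) (mstar : ℤ), (1 - α m) * sd mstar p α m
        = p * (1 - α (-1)) *
            (1 - ∏ m' ∈ Finset.Icc (0 : ℤ) (mstar : ℤ), α m') / Nd mstar p α := by
      calc ∑ m ∈ Finset.Icc (0 : ℤ) (mstar : ℤ), (1 - α m) * sd mstar p α m
          = ∑ m ∈ Finset.Icc (0 : ℤ) (mstar : ℤ),
              (p * (1 - α (-1)) / Nd mstar p α) *
                ((1 - α m) * ∏ m' ∈ Finset.Icc (0 : ℤ) (m - 1), α m') := by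
            refine Finset.sum_congr rfl (fun m hm => ?_)
            rw [sd_eq_of_nonneg mstar p α (Finset.mem_Icc.mp hm).1]; ring
        _ = (p * (1 - α (-1)) / Nd mstar p α) *
              (1 - ∏ m' ∈ Finset.Icc (0 : ℤ) (mstar : ℤ), α m') := by
            rw [← Finset.mul_sum, telescope]
        _ = _ := by ring
    rw [h2, hsdm1]
    field_simp
    ring
  refine ⟨hNpos, hnonneg, hsum1, ?_⟩
  intro s' hs'
  rw [Finset.mem_Icc] at hs'
  have hdecomp : ∑ s ∈ Finset.Icc (-1 : ℤ) (mstar : ℤ),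
      Pd mstar p α s' s * sd mstar p α s
      = (∑ s ∈ Finset.Icc (-1 : ℤ) (mstar : ℤ), T0 mstar s' s * (α s * sd mstar p α s))
        + (if s' = -1 then 1 - p else if s' = 0 then p else 0) *
            ((1 - α (-1)) / Nd mstar p α) := by
    rw [← hS, Finset.mul_sum, ← Finset.sum_add_distrib]
    refine Finset.sum_congr rfl (fun s hs => ?_)
    unfold Pd T1
    ring
  rw [hdecomp]
  by_cases h1 : s' = -1
  · subst h1
    have hT : ∀ s ∈ Finset.Icc (-1 : ℤ) (mstar : ℤ),
        T0 mstar (-1) s * (α s * sd mstar p α s)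
        = (if s = -1 then α s * sd mstar p α s else 0)
          + (if s = (mstar : ℤ) then α s * sd mstar p α s else 0) := by
      intro s hs; rw [Finset.mem_Icc] at hs
      unfold T0
      by_cases e1 : s = -1
      · have e2 : s ≠ (mstar : ℤ) := by omega
        simp [e1, e2]
      · by_cases e2 : s = (mstar : ℤ)
        · simp [e1, e2]
        · have e3 : (-1 : ℤ) ≠ s + 1 := by omega
          simp [e1, e2, e3]
    rw [Finset.sum_congr rfl hT, Finset.sum_add_distrib, Finset.sum_ite_eq',
      Finset.sum_ite_eq',
      if_pos (Finset.mem_Icc.mpr ⟨le_refl _, by omega⟩ : (-1:ℤ) ∈ _),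
      if_pos (Finset.mem_Icc.mpr ⟨by omega, le_refl _⟩ : ((mstar:ℕ):ℤ) ∈ _),
      if_pos rfl]
    have hmm : ((mstar : ℤ)) = -1 ∨ True := Or.inr trivial
    have hps : (∏ m' ∈ Finset.Icc (0 : ℤ) (mstar : ℤ), α m')
        = α (mstar : ℤ) * ∏ m' ∈ Finset.Icc (0 : ℤ) ((mstar : ℤ) - 1), α m' := by
      rw [Icc_split_right (show (0 : ℤ) ≤ (mstar : ℤ) by positivity),
        Finset.prod_insert not_mem_Icc_right]
    rw [hsdm1, sd_eq_of_nonneg mstar p α (show (0:ℤ) ≤ (mstar:ℤ) by positivity), hps]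
    field_simp
    ring
  · by_cases h2 : s' = 0
    · subst h2
      have hT : ∀ s ∈ Finset.Icc (-1 : ℤ) (mstar : ℤ),
          T0 mstar 0 s * (α s * sd mstar p α s) = 0 := by
        intro s hs; rw [Finset.mem_Icc] at hs
        have hz : T0 mstar 0 s = 0 := by
          unfold T0
          by_cases e1 : s = -1
          · simp [e1]
          · by_cases e2 : s = (mstar : ℤ)
            · simp [e1, e2]
            · have e3 : (0 : ℤ) ≠ s + 1 := by omega
              simp [e1, e2, e3]
        rw [hz, zero_mul]
      rw [Finset.sum_eq_zero hT,
        if_neg (show ¬(0 : ℤ) = -1 by omega), if_pos rfl, hsd0]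
      ring
    · have hge : (1 : ℤ) ≤ s' := by omega
      have hT : ∀ s ∈ Finset.Icc (-1 : ℤ) (mstar : ℤ),
          T0 mstar s' s * (α s * sd mstar p α s)
          = if s = s' - 1 then α s * sd mstar p α s else 0 := by
        intro s hs; rw [Finset.mem_Icc] at hs
        unfold T0
        by_cases e1 : s = -1
        · have e4 : ¬s = s' - 1 := by omega
          rw [if_pos e1, if_neg h1, if_neg e4, zero_mul]
        · by_cases e2 : s = (mstar : ℤ)
          · have e4 : ¬s = s' - 1 := by omega
            rw [if_neg e1, if_pos e2, if_neg h1, if_neg e4, zero_mul]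
          · by_cases e3 : s' = s + 1
            · have e4 : s = s' - 1 := by omega
              rw [if_neg e1, if_neg e2, if_pos e3, if_pos e4, one_mul]
            · have e4 : ¬s = s' - 1 := by omega
              rw [if_neg e1, if_neg e2, if_neg e3, if_neg e4, zero_mul]
      rw [Finset.sum_congr rfl hT, Finset.sum_ite_eq',
        if_pos (Finset.mem_Icc.mpr ⟨by omega, by omega⟩ : s' - 1 ∈ _),
        if_neg h1, if_neg h2]
      rw [sd_eq_of_nonneg mstar p α (show (0:ℤ) ≤ s' - 1 by omega),
        sd_eq_of_nonneg mstar p α (show (0:ℤ) ≤ s' by omega)]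
      have hps : (∏ m' ∈ Finset.Icc (0 : ℤ) (s' - 1), α m')
          = α (s' - 1) * ∏ m' ∈ Finset.Icc (0 : ℤ) (s' - 1 - 1), α m' := by
        rw [Icc_split_right (show (0 : ℤ) ≤ s' - 1 by omega),
          Finset.prod_insert not_mem_Icc_right]
      rw [hps]
      ring
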